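/- arXiv:0706.3739 — 3 statements merged into one kernel-verified Lean document; each statement's English description precedes it below -/
import Mathlib

section
/- Let A be an abelian category and W ⊆ X classes of objects of A such that W is an injective cogenerator for X, i.e., Extⁱ_A(X, W) = 0 for all i ≥ 1, X ∈ X, W ∈ W, and for each X ∈ X there is an exact sequence 0 → X → W → X' → 0 with W ∈ W and X' ∈ X. Then: (i) for every bounded strict WX-resolution of an object M, i.e., an exact sequence 0 → X_n → ⋯ → X₁ → X₀ → M → 0 with X₀ ∈ X and X_j ∈ W for j ≥ 1, the sequence remains exact after applying Hom_A(X', −) for every X' ∈ X; (ii) every WX-approximation of M, i.e., an exact sequence 0 → K → X₀ → M → 0 with X₀ ∈ X and K admitting a bounded W-resolution, remains exact after applying Hom_A(X', −) for every X' ∈ X. -/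
/-! Common definitions: relative homological algebra in an abelian category,
following Sather-Wagstaff–Sharif–White, "Gorenstein cohomology in abelian categories". -/

open CategoryTheory CategoryTheory.Limits Opposite

universe w v u

section Prelude

variable {C : Type u} [Category.{v} C] [Abelian C]

/-- `Ext^i_A(M,N) = 0` for all `i ≥ 1`. -/
def ExtVanish [HasExt.{w} C] (M N : C) : Prop :=
  ∀ (i : ℕ), 1 ≤ i → ∀ (e : Abelian.Ext M N i), e = 0

/-- The complex of abelian groups `Hom_A(K, N)` obtained by applying `Hom_A(-, N)`
termwise to a complex `K`; the degree `j` term is `Hom_A(K_j, N)`, so that its homology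
in degree `n` is `H₋ₙ(Hom_A(K,N))` in the homological indexing of the paper. -/
noncomputable def homToCplx {ι : Type*} (c : ComplexShape ι) (N : C) :
    (HomologicalComplex C c)ᵒᵖ ⥤ HomologicalComplex AddCommGrpCat.{v} c.symm :=
  HomologicalComplex.opFunctor _ _ ⋙ (preadditiveYoneda.obj N).mapHomologicalComplex _

/-- The complex of abelian groups `Hom_A(A, K)` obtained by applying `Hom_A(A, -)`
termwise to a complex `K`. -/
noncomputable def homFromCplx {ι : Type*} (c : ComplexShape ι) (A : C) :
    HomologicalComplex C c ⥤ HomologicalComplex AddCommGrpCat.{v} c :=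
  (preadditiveCoyoneda.obj (op A)).mapHomologicalComplex _

/-- A nonnegatively graded chain complex equipped with an augmentation to `M`. -/
structure AugChain (M : C) where
  cx : ChainComplex C ℕ
  π : cx.X 0 ⟶ M
  w : cx.d 1 0 ≫ π = 0

namespace AugChain

variable {M : C} (R : AugChain M)

/-- The augmented complex `X⁺ = (⋯ → X₁ → X₀ → M → 0)`. -/
noncomputable def aug : ChainComplex C ℕ := R.cx.augment R.π R.w

/-- The augmented complex is exact (at degree `0` this says that `π` is an epimorphism). -/
def IsRes : Prop := ∀ j, R.aug.ExactAt j

/-- The terms of the complex vanish in degrees `> n`. -/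
def BddBy (n : ℕ) : Prop := ∀ j, n < j → IsZero (R.cx.X j)

/-- The augmented complex `X⁺` stays exact after applying `Hom_A(A, -)`. -/
def HomFromExact (A : C) : Prop :=
  ∀ j, (((homFromCplx (ComplexShape.down ℕ) A)).obj R.aug).ExactAt j

/-- The augmented complex `X⁺` stays exact after applying `Hom_A(-, A)`. -/
def HomToExact (A : C) : Prop :=
  ∀ j, ((homToCplx (ComplexShape.down ℕ) A).obj (op R.aug)).ExactAt j

/-- A bounded `𝒲`-resolution of `M` of length at most `n`:
an exact sequence `0 → W_n → ⋯ → W₀ → M → 0` with each `W_j ∈ 𝒲`. -/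
def IsBddResBy (𝒲 : C → Prop) (n : ℕ) : Prop :=
  R.IsRes ∧ (∀ j, j ≤ n → 𝒲 (R.cx.X j)) ∧ R.BddBy n

/-- A proper `𝒳`-resolution of `M`: all terms lie in `𝒳`, the augmented complex is
exact, and it stays exact after applying `Hom_A(X', -)` for every `X' ∈ 𝒳`. -/
def IsProperRes (𝒳 : C → Prop) : Prop :=
  R.IsRes ∧ (∀ j, 𝒳 (R.cx.X j)) ∧ ∀ A, 𝒳 A → R.HomFromExact A

/-- A projective resolution of `M`. -/
def IsProjRes : Prop :=
  R.IsRes ∧ ∀ j, Projective (R.cx.X j)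

/-- A bounded strict `𝒲𝒳`-resolution of `M` of length at most `n`: an exact sequence
`0 → X_n → ⋯ → X₁ → X₀ → M → 0` with `X₀ ∈ 𝒳` and `X_j ∈ 𝒲` for `1 ≤ j ≤ n`. -/
def IsStrictResBy (𝒲 𝒳 : C → Prop) (n : ℕ) : Prop :=
  R.IsRes ∧ R.BddBy n ∧ 𝒳 (R.cx.X 0) ∧ ∀ j, 1 ≤ j → j ≤ n → 𝒲 (R.cx.X j)

end AugChain

/-- `M` admits a bounded `𝒲`-resolution of length at most `n`. -/
def HasBddResBy (𝒲 : C → Prop) (M : C) (n : ℕ) : Prop :=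
  ∃ R : AugChain M, R.IsBddResBy 𝒲 n

/-- `M` admits a bounded `𝒲`-resolution, i.e. `𝒲`-pd of `M` is finite. -/
def HasBddRes (𝒲 : C → Prop) (M : C) : Prop :=
  ∃ n, HasBddResBy 𝒲 M n

/-- `M` admits a proper `𝒲`-resolution. -/
def HasProperRes (𝒲 : C → Prop) (M : C) : Prop :=
  ∃ R : AugChain M, R.IsProperRes 𝒲

/-- A nonnegatively graded cochain complex equipped with an augmentation from `N`. -/
structure AugCochain (N : C) where
  cx : CochainComplex C ℕ
  ι : N ⟶ cx.X 0
  w : ι ≫ cx.d 0 1 = 0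

namespace AugCochain

variable {N : C} (R : AugCochain N)

/-- The augmented complex `⁺Y = (0 → N → Y⁰ → Y¹ → ⋯)`. -/
noncomputable def aug : CochainComplex C ℕ := R.cx.augment R.ι R.w

/-- The augmented complex is exact (at degree `0` this says that `ι` is a monomorphism). -/
def IsCores : Prop := ∀ j, R.aug.ExactAt j

/-- The terms of the complex vanish in degrees `> n`. -/
def BddBy (n : ℕ) : Prop := ∀ j, n < j → IsZero (R.cx.X j)

/-- The augmented complex `⁺Y` stays exact after applying `Hom_A(A, -)`. -/
def HomFromExact (A : C) : Prop :=
  ∀ j, ((homFromCplx (ComplexShape.up ℕ) A).obj R.aug).ExactAt j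

/-- The augmented complex `⁺Y` stays exact after applying `Hom_A(-, A)`. -/
def HomToExact (A : C) : Prop :=
  ∀ j, ((homToCplx (ComplexShape.up ℕ) A).obj (op R.aug)).ExactAt j

/-- A bounded `𝒱`-coresolution of `N` of length at most `n`:
an exact sequence `0 → N → V⁰ → ⋯ → Vⁿ → 0` with each `Vʲ ∈ 𝒱`. -/
def IsBddCoresBy (𝒱 : C → Prop) (n : ℕ) : Prop :=
  R.IsCores ∧ (∀ j, j ≤ n → 𝒱 (R.cx.X j)) ∧ R.BddBy n

/-- A proper `𝒴`-coresolution of `N`. -/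
def IsProperCores (𝒴 : C → Prop) : Prop :=
  R.IsCores ∧ (∀ j, 𝒴 (R.cx.X j)) ∧ ∀ A, 𝒴 A → R.HomToExact A

end AugCochain

/-- `N` admits a bounded `𝒱`-coresolution of length at most `n`. -/
def HasBddCoresBy (𝒱 : C → Prop) (N : C) (n : ℕ) : Prop :=
  ∃ R : AugCochain N, R.IsBddCoresBy 𝒱 n

/-- `N` admits a bounded `𝒱`-coresolution, i.e. `𝒱`-id of `N` is finite. -/
def HasBddCores (𝒱 : C → Prop) (N : C) : Prop :=
  ∃ n, HasBddCoresBy 𝒱 N n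

/-- `𝒲` is a cogenerator for `𝒳`: `𝒲 ⊆ 𝒳` and every `X ∈ 𝒳` fits in a short exact
sequence `0 → X → W → X' → 0` with `W ∈ 𝒲` and `X' ∈ 𝒳`. -/
def IsCogenFor (𝒲 𝒳 : C → Prop) : Prop :=
  (∀ A, 𝒲 A → 𝒳 A) ∧
  ∀ X, 𝒳 X → ∃ (W X' : C) (i : X ⟶ W) (p : W ⟶ X') (hw : i ≫ p = 0),
    𝒲 W ∧ 𝒳 X' ∧ (ShortComplex.mk i p hw).ShortExact

/-- `𝒱` is a generator for `𝒴`: `𝒱 ⊆ 𝒴` and every `Y ∈ 𝒴` fits in a short exact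
sequence `0 → Y' → V → Y → 0` with `V ∈ 𝒱` and `Y' ∈ 𝒴`. -/
def IsGenFor (𝒱 𝒴 : C → Prop) : Prop :=
  (∀ A, 𝒱 A → 𝒴 A) ∧
  ∀ Y, 𝒴 Y → ∃ (Y' V : C) (i : Y' ⟶ V) (p : V ⟶ Y) (hw : i ≫ p = 0),
    𝒴 Y' ∧ 𝒱 V ∧ (ShortComplex.mk i p hw).ShortExact

/-- `𝒳` is closed under extensions. -/
def ClosedUnderExt (𝒳 : C → Prop) : Prop :=
  ∀ (S : ShortComplex C), S.ShortExact → 𝒳 S.X₁ → 𝒳 S.X₃ → 𝒳 S.X₂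

/-- `𝒳` is closed under isomorphisms. -/
def IsoClosed (𝒳 : C → Prop) : Prop :=
  ∀ ⦃A B : C⦄, (A ≅ B) → 𝒳 A → 𝒳 B

end Prelude

namespace StmtAux

open Abelian Limits

section Bridge

variable {C : Type u} [Category.{v} C] [Abelian C]

/-- An isomorphism `singleFunctor C 0 ⋙ homologyFunctor C 0 ≅ 𝟭 C`. -/
noncomputable def eIso [HasDerivedCategory.{w'} C] :
    DerivedCategory.singleFunctor C 0 ⋙ DerivedCategory.homologyFunctor C 0 ≅ 𝟭 C :=
  Functor.isoWhiskerRight ((SingleFunctors.evaluation C (DerivedCategory C) 0).mapIso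
      (DerivedCategory.singleFunctorsPostcompQIso C)) (DerivedCategory.homologyFunctor C 0) ≪≫
    Functor.associator _ _ _ ≪≫
    Functor.isoWhiskerLeft _ (DerivedCategory.homologyFunctorFactors C 0) ≪≫
    HomologicalComplex.homologyFunctorSingleIso C (ComplexShape.up ℤ) 0

variable [HasExt.{w} C]

/-- A retraction `Ext X Y 0 → (X ⟶ Y)` of `Ext.mk₀`. -/
noncomputable def ext0ToHom {X Y : C} (x : Ext X Y 0) : X ⟶ Y := by
  letI := HasDerivedCategory.standard C
  exact (eIso (C := C)).inv.app X ≫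
    (DerivedCategory.homologyFunctor C 0).map
      (x.hom ≫ (shiftFunctorZero' (DerivedCategory C) ((0 : ℕ) : ℤ)
        (by simp)).hom.app _) ≫ (eIso (C := C)).hom.app Y

lemma ext0ToHom_mk₀ {X Y : C} (f : X ⟶ Y) : ext0ToHom (Ext.mk₀ f) = f := by
  letI := HasDerivedCategory.standard C
  dsimp only [ext0ToHom]
  rw [Ext.mk₀_hom]
  dsimp only [ShiftedHom.mk₀]
  rw [Category.assoc, Iso.inv_hom_id_app]
  dsimp only [Functor.id_obj]
  rw [Category.comp_id]
  have := (eIso (C := C)).hom.naturality f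
  dsimp only [Functor.comp_obj, Functor.comp_map, Functor.id_obj, Functor.id_map] at this
  rw [this, ← Category.assoc, Iso.inv_hom_id_app]
  simp

lemma ext0ToHom_comp_mk₀ {X Y Z : C} (x : Ext X Y 0) (g : Y ⟶ Z) :
    ext0ToHom (x.comp (Ext.mk₀ g) (add_zero 0)) = ext0ToHom x ≫ g := by
  letI := HasDerivedCategory.standard C
  dsimp only [ext0ToHom]
  rw [Ext.comp_hom, Ext.mk₀_hom, ShiftedHom.comp_mk₀]
  rw [Category.assoc, NatTrans.naturality]
  dsimp only [Functor.id_obj, Functor.id_map]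
  rw [← Category.assoc, ← Category.assoc, Functor.map_comp]
  have := (eIso (C := C)).hom.naturality g
  dsimp only [Functor.comp_obj, Functor.comp_map, Functor.id_obj, Functor.id_map] at this
  simp only [Category.assoc]
  rw [this]

end Bridge

section Main

variable {C : Type u} [Category.{v} C] [Abelian C] [HasExt.{w} C]

lemma extVanish_of_isZero {N : C} (h : IsZero N) (M : C) (i : ℕ)
    (e : Ext M N i) : e = 0 := by
  have : e = e.comp (Ext.mk₀ (𝟙 N)) (add_zero i) := (Ext.comp_mk₀_id e).symm
  rw [this, h.eq_of_src (𝟙 N) 0, Ext.mk₀_zero, Ext.comp_zero]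

/-- Two-of-three for Ext-vanishing along a short exact sequence. -/
lemma extVanish_two_of_three {S : ShortComplex C} (hS : S.ShortExact) (X' : C)
    (h1 : ∀ i, 1 ≤ i → ∀ e : Ext X' S.X₁ i, e = 0)
    (h2 : ∀ i, 1 ≤ i → ∀ e : Ext X' S.X₂ i, e = 0) :
    ∀ i, 1 ≤ i → ∀ e : Ext X' S.X₃ i, e = 0 := by
  intro i hi e
  obtain ⟨x₂, hx₂⟩ := Ext.covariant_sequence_exact₃ X' hS e rfl (h1 (i + 1) (by omega) _)
  rw [← hx₂, h2 i hi x₂, Ext.zero_comp]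

/-- Lifting along the epimorphism of a short exact sequence when `Ext¹` of the
kernel vanishes. -/
lemma lift_of_ext1_vanish {S : ShortComplex C} (hS : S.ShortExact) {X' : C}
    (h1 : ∀ e : Ext X' S.X₁ 1, e = 0) (φ : X' ⟶ S.X₃) :
    ∃ ψ : X' ⟶ S.X₂, ψ ≫ S.g = φ := by
  obtain ⟨x₂, hx₂⟩ := Ext.covariant_sequence_exact₃ X' hS (Ext.mk₀ φ) (zero_add 1) (h1 _)
  exact ⟨ext0ToHom x₂, by rw [← ext0ToHom_comp_mk₀, hx₂, ext0ToHom_mk₀]⟩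

variable (K : ChainComplex C ℕ)

/-- The canonical short complex `0 → Z_{k+1} → K_{k+2} → Z_k → 0`. -/
@[simps! X₁ X₂ X₃ f g]
noncomputable def cyclesSES (k : ℕ) : ShortComplex C :=
  ShortComplex.mk (kernel.ι (K.d (k + 2) (k + 1)))
    (kernel.lift (K.d (k + 1) k) (K.d (k + 2) (k + 1)) (K.d_comp_d _ _ _))
    (by rw [← cancel_mono (kernel.ι (K.d (k + 1) k)), Category.assoc, kernel.lift_ι,
          kernel.condition, zero_comp])

lemma cyclesSES_shortExact (k : ℕ) (hex : K.ExactAt (k + 1)) :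
    (cyclesSES K k).ShortExact := by
  rw [K.exactAt_iff' (k + 2) (k + 1) k (by simp) (by simp)] at hex
  have hepi : Epi (cyclesSES K k).g := by
    have := (ShortComplex.exact_iff_epi_kernel_lift _).1 hex
    exact this
  have hexact : (cyclesSES K k).Exact := by
    apply ShortComplex.exact_of_f_is_kernel
    refine KernelFork.IsLimit.ofι _ _
      (fun {T} t ht => kernel.lift _ t ?_) (fun {T} t ht => by exact kernel.lift_ι _ _ _) ?_
    · have : t ≫ (cyclesSES K k).g ≫ kernel.ι (K.d (k + 1) k) = 0 := by
        exact (Category.assoc _ _ _).symm.trans (by rw [ht]; exact zero_comp)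
      have h2 : (cyclesSES K k).g ≫ kernel.ι (K.d (k + 1) k) = K.d (k + 2) (k + 1) :=
        kernel.lift_ι _ _ _
      rw [h2] at this; exact this
    · intro T t ht m hm
      apply (cancel_mono (kernel.ι (K.d (k + 2) (k + 1)))).1
      exact hm.trans (kernel.lift_ι _ _ _).symm
  have hm : Mono (cyclesSES K k).f := by rw [cyclesSES_f]; exact (inferInstance : Mono (kernel.ι (K.d (k + 2) (k + 1))))
  exact { exact := hexact, mono_f := hm, epi_g := hepi }

/-- Downward induction: vanishing of `Ext^{≥1}(X', Z_k)` for the cycles of a bounded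
exact complex whose terms (in degrees `≥ 2`) are `Ext`-orthogonal to `X'`. -/
lemma extVanish_cycles (hex : ∀ j, K.ExactAt j) (X' : C)
    (hvan : ∀ k, ∀ i, 1 ≤ i → ∀ e : Ext X' (K.X (k + 2)) i, e = 0)
    (n : ℕ) (hbdd : ∀ k, n < k → IsZero (K.X k)) :
    ∀ k, ∀ i, 1 ≤ i → ∀ e : Ext X' (kernel (K.d (k + 1) k)) i, e = 0 := by
  have main : ∀ t k, n ≤ k + t →
      ∀ i, 1 ≤ i → ∀ e : Ext X' (kernel (K.d (k + 1) k)) i, e = 0 := by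
    intro t
    induction t with
    | zero =>
      intro k hk i _ e
      have hz : IsZero (K.X (k + 1)) := hbdd (k + 1) (by omega)
      exact extVanish_of_isZero (IsZero.of_mono (kernel.ι (K.d (k + 1) k)) hz) X' i e
    | succ t ih =>
      intro k hk i hi e
      have hS := cyclesSES_shortExact K k (hex (k + 1))
      exact extVanish_two_of_three hS X'
        (fun i hi e => ih (k + 1) (by omega) i hi e)
        (hvan k) i hi e
  exact fun k => main n k (by omega)

lemma exactAt_zero_epi {M : C} (R : AugChain M) (h : R.aug.ExactAt 0) :
    Epi (R.aug.d 1 0) := by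
  rw [R.aug.exactAt_iff' 1 0 0 (by simp) (by simp)] at h
  exact h.epi_f (R.aug.shape 0 0 (by simp))

/-- The short exact sequence `0 → Z_0 → X_1 → M → 0` at the bottom of an exact
augmented complex. -/
noncomputable def bottomSES {M : C} (R : AugChain M) : ShortComplex C :=
  ShortComplex.mk (kernel.ι (R.aug.d 1 0)) (R.aug.d 1 0) (kernel.condition _)

lemma bottomSES_shortExact {M : C} (R : AugChain M) (h : R.aug.ExactAt 0) :
    (bottomSES R).ShortExact where
  exact := ShortComplex.exact_of_f_is_kernel _ (kernelIsKernel _)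
  mono_f := by dsimp [bottomSES]; infer_instance
  epi_g := exactAt_zero_epi R h

/-- If all `Ext^{≥1}(X', Z_k)` vanish, the augmented complex stays exact
after applying `Hom(X', -)`. -/
lemma homFromExact_of_extVanish_cycles {M : C} (R : AugChain M) (hres : R.IsRes) {X' : C}
    (h0 : ∀ k, ∀ e : Ext X' (kernel (R.aug.d (k + 1) k)) 1, e = 0) :
    R.HomFromExact X' := by
  intro j
  rw [HomologicalComplex.exactAt_iff' _ (j + 1) j (if j = 0 then 0 else j - 1)
    (by simp) (by cases j <;> simp)]
  rw [ShortComplex.ab_exact_iff]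
  match j with
  | 0 =>
    intro φ _
    obtain ⟨ψ, hψ⟩ := lift_of_ext1_vanish (bottomSES_shortExact R (hres 0)) (h0 0)
      (φ : X' ⟶ R.aug.X 0)
    exact ⟨ψ, hψ⟩
  | (j + 1) =>
    intro φ hφ
    have hφ' : (φ : X' ⟶ R.aug.X (j + 1)) ≫ R.aug.d (j + 1) j = 0 := hφ
    have hS := cyclesSES_shortExact R.aug j (hres (j + 1))
    obtain ⟨ψ, hψ⟩ := lift_of_ext1_vanish hS (h0 (j + 1))
      (kernel.lift (R.aug.d (j + 1) j) φ hφ')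
    refine ⟨ψ, ?_⟩
    have : ψ ≫ R.aug.d (j + 2) (j + 1) = φ := by
      have h2 : (cyclesSES R.aug j).g ≫ kernel.ι (R.aug.d (j + 1) j) =
          R.aug.d (j + 2) (j + 1) := kernel.lift_ι _ _ _
      exact ((congrArg (fun q => ψ ≫ q) h2).symm.trans (Category.assoc _ _ _).symm).trans
        (by rw [hψ]; exact kernel.lift_ι _ _ _)
    exact this

end Main

end StmtAux

open StmtAux Limits

/-- Lemma 3.4(a)(b). Let `𝒲` be an injective cogenerator for `𝒳`
(i.e. `𝒲` is a cogenerator for `𝒳` and `Ext^{≥1}_A(X, W) = 0` for `X ∈ 𝒳`, `W ∈ 𝒲`).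
Then: (i) every bounded strict `𝒲𝒳`-resolution of an object `M` stays exact after
applying `Hom_A(X', -)` for every `X' ∈ 𝒳`; (ii) every `𝒲𝒳`-approximation
`0 → K → X₀ → M → 0` (with `X₀ ∈ 𝒳` and `K` of finite `𝒲`-projective dimension)
stays exact after applying `Hom_A(X', -)` for every `X' ∈ 𝒳`. -/
theorem stmt3 {C : Type u} [Category.{v} C] [Abelian C] [HasExt.{w} C]
    (𝒲 𝒳 : C → Prop) (h𝒲 : IsoClosed 𝒲) (h𝒳 : IsoClosed 𝒳)
    (hcogen : IsCogenFor 𝒲 𝒳)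
    (hperp : ∀ X W, 𝒳 X → 𝒲 W → ExtVanish X W) :
    (∀ (M : C) (R : AugChain M) (n : ℕ), R.IsStrictResBy 𝒲 𝒳 n →
      ∀ X', 𝒳 X' → R.HomFromExact X') ∧
    (∀ (M K X₀ : C) (i : K ⟶ X₀) (p : X₀ ⟶ M) (hw : i ≫ p = 0),
      (ShortComplex.mk i p hw).ShortExact → 𝒳 X₀ → HasBddRes 𝒲 K →
      ∀ X', 𝒳 X' →
        ((ShortComplex.mk i p hw).map (preadditiveCoyoneda.obj (op X'))).ShortExact) := by
  constructor
  · rintro M R n ⟨hres, hbdd, hX0, hW⟩ X' hX'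
    have hvan : ∀ k, ∀ j, 1 ≤ j → ∀ e : Abelian.Ext X' (R.aug.X (k + 2)) j, e = 0 := by
      intro k j hj e
      by_cases h : k + 1 ≤ n
      · exact hperp X' _ hX' (hW (k + 1) (by omega) h) j hj e
      · exact extVanish_of_isZero (hbdd (k + 1) (by omega)) X' j e
    have hbdd' : ∀ k, n + 1 < k → IsZero (R.aug.X k) := by
      intro k hk
      obtain ⟨k', rfl⟩ : ∃ k', k = k' + 1 := ⟨k - 1, by omega⟩
      exact hbdd k' (by omega)
    have h0 := extVanish_cycles R.aug hres X' hvan (n + 1) hbdd'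
    exact homFromExact_of_extVanish_cycles R hres (fun k => h0 k 1 le_rfl)
  · rintro M K X₀ i p hw hSES hX₀ ⟨n, R, hres, hWmem, hbdd⟩ X' hX'
    have hvan : ∀ k, ∀ j, 1 ≤ j → ∀ e : Abelian.Ext X' (R.aug.X (k + 2)) j, e = 0 := by
      intro k j hj e
      by_cases h : k + 1 ≤ n
      · exact hperp X' _ hX' (hWmem (k + 1) h) j hj e
      · exact extVanish_of_isZero (hbdd (k + 1) (by omega)) X' j e
    have hbdd' : ∀ k, n + 1 < k → IsZero (R.aug.X k) := by
      intro k hk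
      obtain ⟨k', rfl⟩ : ∃ k', k = k' + 1 := ⟨k - 1, by omega⟩
      exact hbdd k' (by omega)
    have h0 := extVanish_cycles R.aug hres X' hvan (n + 1) hbdd'
    have hvanK : ∀ j, 1 ≤ j → ∀ e : Abelian.Ext X' K j, e = 0 := by
      have hbot := bottomSES_shortExact R (hres 0)
      have h2 : ∀ j, 1 ≤ j → ∀ e : Abelian.Ext X' (R.aug.X 1) j, e = 0 :=
        fun j hj e => hperp X' _ hX' (hWmem 0 (by omega)) j hj e
      exact extVanish_two_of_three hbot X' (fun j hj e => h0 0 j hj e) h2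
    have hmono : Mono (((ShortComplex.mk i p hw).map
        (preadditiveCoyoneda.obj (op X'))).f) := by
      rw [AddCommGrpCat.mono_iff_injective]
      haveI : Mono i := hSES.mono_f
      intro a b hab
      exact (cancel_mono i).1 hab
    have hepi : Epi (((ShortComplex.mk i p hw).map
        (preadditiveCoyoneda.obj (op X'))).g) := by
      rw [AddCommGrpCat.epi_iff_surjective]
      intro φ
      obtain ⟨ψ, hψ⟩ := lift_of_ext1_vanish hSES (hvanK 1 le_rfl) φ
      exact ⟨ψ, hψ⟩
    refine { exact := ?_, mono_f := hmono, epi_g := hepi }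
    rw [ShortComplex.ab_exact_iff]
    intro φ hφ
    haveI : Mono i := hSES.mono_f
    obtain ⟨l, hl⟩ := hSES.exact.lift' φ hφ
    exact ⟨l, hl⟩
end

section
/- Let A be an abelian category, X a class of objects of A closed under extensions, and W a cogenerator for X. If an object M admits a bounded X-resolution of length n (an exact sequence 0 → X_n → ⋯ → X₀ → M → 0 with each X_j ∈ X), then: (i) M admits a bounded strict WX-resolution of length at most n, i.e., an exact sequence 0 → X'_n → ⋯ → X'₁ → X'₀ → M → 0 with X'₀ ∈ X and X'_j ∈ W for j ≥ 1; (ii) M admits a WX-approximation, i.e., an exact sequence 0 → K → X₀ → M → 0 with X₀ ∈ X and K admitting a bounded W-resolution; and (iii) M admits a WX-hull, i.e., an exact sequence 0 → M → K' → X' → 0 with X' ∈ X and K' admitting a bounded W-resolution. -/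
/-! Common definitions: relative homological algebra in an abelian category,
following Sather-Wagstaff–Sharif–White, "Gorenstein cohomology in abelian categories". -/

open CategoryTheory CategoryTheory.Limits Opposite

universe w v u

/-! ### Auxiliary development -/

namespace Stmt4Aux

open ZeroObject

variable {C : Type u} [Category.{v} C] [Abelian C]

lemma epi_pushout_inl {X Y Z : C} (f : X ⟶ Y) (g : X ⟶ Z) [Epi g] : Epi (pushout.inl f g) := by
  constructor
  intro T u v huv
  apply pushout.hom_ext huv
  rw [← cancel_epi g, ← pushout.condition_assoc, ← pushout.condition_assoc, huv]

section PO

variable {X Y Z Q : C} (f : X ⟶ Y) (g : X ⟶ Z)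

/-- first SES: `0 → Z → pushout f g → Q → 0` when `f` is mono with cokernel `c : Y ⟶ Q`. -/
lemma shortExact_pushout_inr [Mono f] (c : Y ⟶ Q) (w : f ≫ c = 0)
    (hc : IsColimit (CokernelCofork.ofπ c w)) [Epi c] :
    (ShortComplex.mk (pushout.inr f g) (pushout.desc c 0 (by rw [w, comp_zero]))
      (pushout.inr_desc _ _ _)).ShortExact := by
  have hepi : Epi (pushout.desc c 0 (show f ≫ c = g ≫ 0 by rw [w, comp_zero])) := by
    have h1 : pushout.inl f g ≫ pushout.desc c 0 (show f ≫ c = g ≫ 0 by rw [w, comp_zero]) = c :=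
      pushout.inl_desc _ _ _
    exact epi_of_epi_fac h1
  refine ShortComplex.ShortExact.mk' ?_ inferInstance hepi
  apply ShortComplex.exact_of_g_is_cokernel
  refine CokernelCofork.IsColimit.ofπ' _ _ (fun {A} k hk => ?_)
  have hk' : pushout.inr f g ≫ k = 0 := hk
  have hfk : f ≫ (pushout.inl f g ≫ k) = 0 := by
    rw [pushout.condition_assoc, hk', comp_zero]
  obtain ⟨u, hu⟩ := CokernelCofork.IsColimit.desc' hc (pushout.inl f g ≫ k) hfk
  refine ⟨u, ?_⟩
  apply pushout.hom_ext
  · rw [pushout.inl_desc_assoc]; exact hu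
  · rw [pushout.inr_desc_assoc, zero_comp]; exact hk'.symm

/-- symmetric version: `0 → Y → pushout f g → Q → 0` when `g` is mono with cokernel `c : Z ⟶ Q`. -/
lemma shortExact_pushout_inl [Mono g] (c : Z ⟶ Q) (w : g ≫ c = 0)
    (hc : IsColimit (CokernelCofork.ofπ c w)) [Epi c] :
    (ShortComplex.mk (pushout.inl f g) (pushout.desc 0 c (by rw [w, comp_zero]))
      (pushout.inl_desc _ _ _)).ShortExact := by
  have hepi : Epi (pushout.desc 0 c (show f ≫ 0 = g ≫ c by rw [w, comp_zero])) := by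
    have h1 : pushout.inr f g ≫ pushout.desc 0 c (show f ≫ 0 = g ≫ c by rw [w, comp_zero]) = c :=
      pushout.inr_desc _ _ _
    exact epi_of_epi_fac h1
  refine ShortComplex.ShortExact.mk' ?_ inferInstance hepi
  apply ShortComplex.exact_of_g_is_cokernel
  refine CokernelCofork.IsColimit.ofπ' _ _ (fun {A} k hk => ?_)
  have hk' : pushout.inl f g ≫ k = 0 := hk
  have hgk : g ≫ (pushout.inr f g ≫ k) = 0 := by
    rw [← pushout.condition_assoc, hk', comp_zero]
  obtain ⟨u, hu⟩ := CokernelCofork.IsColimit.desc' hc (pushout.inr f g ≫ k) hgk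
  refine ⟨u, ?_⟩
  apply pushout.hom_ext
  · rw [pushout.inl_desc_assoc, zero_comp]; exact hk'.symm
  · rw [pushout.inr_desc_assoc]; exact hu

lemma ker_inl_zero {N : C} (k : N ⟶ X) (wk : k ≫ g = 0) :
    (k ≫ f) ≫ pushout.inl f g = 0 := by
  rw [Category.assoc, pushout.condition, reassoc_of% wk, zero_comp]

/-- kernel-side SES: `0 → N → Y → pushout f g → 0` when `f` mono, `g` epi, with
`k : N ⟶ X` a kernel of `g`. -/
lemma shortExact_pushout_ker {N : C} [Mono f] [Epi g] (k : N ⟶ X) (wk : k ≫ g = 0) [Mono k]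
    (hk : IsLimit (KernelFork.ofι k wk)) :
    (ShortComplex.mk (k ≫ f) (pushout.inl f g) (ker_inl_zero f g k wk)).ShortExact := by
  have hepi : Epi (pushout.inl f g) := epi_pushout_inl f g
  have hmonol : Mono (biprod.lift f (-g)) := by
    have : biprod.lift f (-g) ≫ biprod.fst = f := biprod.lift_fst _ _
    exact mono_of_mono_fac this
  have hL := Abelian.monoIsKernelOfCokernel _
    (Abelian.BiproductToPushoutIsCokernel.isColimitBiproductToPushout f g)
  refine ShortComplex.ShortExact.mk' ?_ inferInstance hepi
  apply ShortComplex.exact_of_f_is_kernel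
  refine KernelFork.IsLimit.ofι' _ _ (fun {T} t ht => ?_)
  have h1 : biprod.lift t (0 : T ⟶ Z) ≫
      Abelian.BiproductToPushoutIsCokernel.biproductToPushout f g = 0 := by
    simp [ht]
  obtain ⟨u, hu⟩ := KernelFork.IsLimit.lift' hL _ h1
  dsimp at hu
  have huf : u ≫ f = t := by
    have := congrArg (· ≫ biprod.fst) hu
    simpa using this
  have hug : u ≫ g = 0 := by
    have := congrArg (· ≫ biprod.snd) hu
    simp at this
    simpa using this
  obtain ⟨v, hv⟩ := KernelFork.IsLimit.lift' hk u hug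
  dsimp at hv
  exact ⟨v, show v ≫ (k ≫ f) = t by rw [← Category.assoc, hv, huf]⟩

end PO

/-! ### Exactness of ℕ-indexed chain complexes in low degrees -/

lemma chain_exactAt_succ_iff (K : ChainComplex C ℕ) (j : ℕ) :
    K.ExactAt (j + 1) ↔
      (ShortComplex.mk (K.d (j + 2) (j + 1)) (K.d (j + 1) j) (K.d_comp_d _ _ _)).Exact :=
  K.exactAt_iff' (j + 2) (j + 1) j (by rw [ChainComplex.prev]; omega) (by rw [ChainComplex.next_nat_succ])

lemma chain_exactAt_zero_iff (K : ChainComplex C ℕ) :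
    K.ExactAt 0 ↔ Epi (K.d 1 0) := by
  rw [K.exactAt_iff' 1 0 0 (by rw [ChainComplex.prev]; omega) ChainComplex.next_nat_zero]
  exact ShortComplex.exact_iff_epi _ (K.shape 0 0 (by simp))

lemma exactAt_of_isZero (K : ChainComplex C ℕ) (j : ℕ) (h : IsZero (K.X j)) : K.ExactAt j :=
  ShortComplex.exact_of_isZero_X₂ _ h

/-! ### Iterated short exact sequence resolutions -/

/-- Resolutions by iterated short exact sequences. -/
def Res (𝒴 : C → Prop) : ℕ → C → Prop
  | 0, M => 𝒴 M
  | n + 1, M => ∃ (K Y : C) (i : K ⟶ Y) (p : Y ⟶ M) (hw : i ≫ p = 0),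
      (ShortComplex.mk i p hw).ShortExact ∧ 𝒴 Y ∧ Res 𝒴 n K

lemma zero_res {𝒲 : C → Prop} {U W₀ : C} (hz : IsZero U) (hW₀ : 𝒲 W₀) : Res 𝒲 1 U := by
  refine ⟨W₀, W₀, 𝟙 W₀, 0, by simp, ?_, hW₀, hW₀⟩
  refine ShortComplex.ShortExact.mk' ?_ inferInstance ⟨fun u v _ => hz.eq_of_src u v⟩
  exact (ShortComplex.exact_iff_epi _ rfl).2 inferInstance

/-- the object `M` placed in degree 0 -/
noncomputable def trivX (M : C) : ℕ → C
  | 0 => M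
  | _ + 1 => 0

/-- the complex with `M` in degree 0 and zeros elsewhere -/
noncomputable def trivCx (M : C) : ChainComplex C ℕ where
  X := trivX M
  d _ _ := 0
  shape _ _ _ := rfl
  d_comp_d' _ _ _ _ _ := by simp

/-- the trivial augmented chain complex over `M` -/
noncomputable def trivialAug (M : C) : AugChain M where
  cx := trivCx M
  π := 𝟙 M
  w := zero_comp

lemma trivialAug_isRes (M : C) : (trivialAug M).IsRes := by
  intro j
  match j with
  | 0 =>
    rw [chain_exactAt_zero_iff]
    show Epi (𝟙 M)
    infer_instance
  | 1 =>
    rw [chain_exactAt_succ_iff]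
    exact (ShortComplex.exact_iff_mono _ rfl).2
      (show Mono ((trivialAug M).aug.d 1 0) from (inferInstance : Mono (𝟙 M)))
  | (j + 2) =>
    exact exactAt_of_isZero _ _ (show IsZero (0 : C) from isZero_zero C)

lemma trivialAug_bdd (M : C) : (trivialAug M).BddBy 0 := by
  intro j hj
  match j, hj with
  | (j' + 1), _ => exact (show IsZero (0 : C) from isZero_zero C)

/-- prepend a short exact sequence `0 → K → Y → M → 0` to an augmented complex over `K` -/
noncomputable def prepend {K M Y : C} (R : AugChain K) (i : K ⟶ Y) (p : Y ⟶ M)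
    (hip : i ≫ p = 0) : AugChain M where
  cx := R.cx.augment (R.π ≫ i) (by rw [← Category.assoc, R.w, zero_comp])
  π := p
  w := show (R.π ≫ i) ≫ p = 0 by rw [Category.assoc, hip, comp_zero]

lemma isRes_epi_π {M : C} (R : AugChain M) (h : R.IsRes) : Epi R.π := by
  have h0 := h 0
  rw [chain_exactAt_zero_iff] at h0
  exact h0

lemma prepend_isRes {K M Y : C} (R : AugChain K) (hR : R.IsRes) {i : K ⟶ Y} {p : Y ⟶ M}
    {hip : i ≫ p = 0} (hse : (ShortComplex.mk i p hip).ShortExact) :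
    (prepend R i p hip).IsRes := by
  haveI hepi : Epi R.π := isRes_epi_π R hR
  haveI : Mono i := hse.mono_f
  intro j
  match j with
  | 0 =>
    rw [chain_exactAt_zero_iff]
    exact hse.epi_g
  | 1 =>
    rw [chain_exactAt_succ_iff]
    show (ShortComplex.mk (R.π ≫ i) p (show (R.π ≫ i) ≫ p = 0 by
      rw [Category.assoc, hip, comp_zero])).Exact
    refine (ShortComplex.exact_iff_of_epi_of_isIso_of_mono
      (S₁ := ShortComplex.mk (R.π ≫ i) p (by rw [Category.assoc, hip, comp_zero]))
      (S₂ := ShortComplex.mk i p hip)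
      ⟨R.π, 𝟙 _, 𝟙 _, by simp, by simp⟩).2 hse.exact
  | 2 =>
    rw [chain_exactAt_succ_iff]
    show (ShortComplex.mk (R.cx.d 1 0) (R.π ≫ i) (by rw [← Category.assoc, R.w, zero_comp])).Exact
    have h1 := hR 1
    rw [chain_exactAt_succ_iff] at h1
    have h1' : (ShortComplex.mk (R.cx.d 1 0) R.π R.w).Exact := h1
    refine (ShortComplex.exact_iff_of_epi_of_isIso_of_mono
      (S₁ := ShortComplex.mk (R.cx.d 1 0) R.π R.w)
      (S₂ := ShortComplex.mk (R.cx.d 1 0) (R.π ≫ i)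
        (by rw [← Category.assoc, R.w, zero_comp]))
      ⟨𝟙 _, 𝟙 _, i, by simp, by simp⟩).1 h1'
  | (l + 3) =>
    rw [chain_exactAt_succ_iff]
    have h1 := hR (l + 2)
    rw [chain_exactAt_succ_iff] at h1
    exact h1

/-- Conversion: `Res` data gives an honest bounded resolution. -/
lemma res_to_aug {𝒴 : C → Prop} : ∀ (m : ℕ) (M : C), Res 𝒴 m M →
    ∃ R : AugChain M, R.IsRes ∧ (∀ j, j ≤ m → 𝒴 (R.cx.X j)) ∧ R.BddBy m := by
  intro m
  induction m with
  | zero =>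
    intro M h
    refine ⟨trivialAug M, trivialAug_isRes M, ?_, trivialAug_bdd M⟩
    intro j hj
    obtain rfl : j = 0 := Nat.le_zero.mp hj
    exact h
  | succ m ih =>
    intro M h
    obtain ⟨K, Y, i, p, hip, hse, hY, hK⟩ := h
    obtain ⟨R, hR1, hR2, hR3⟩ := ih K hK
    refine ⟨prepend R i p hip, prepend_isRes R hR1 hse, ?_, ?_⟩
    · intro j hj
      match j with
      | 0 => exact hY
      | (j' + 1) => exact hR2 j' (by omega)
    · intro j hj
      match j, hj with
      | (j' + 1), _ => exact hR3 j' (by omega)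

lemma res_hasBddResBy {𝒴 : C → Prop} (m : ℕ) (M : C) (h : Res 𝒴 m M) :
    HasBddResBy 𝒴 M m := by
  obtain ⟨R, h1, h2, h3⟩ := res_to_aug m M h
  exact ⟨R, h1, h2, h3⟩

/-- Conversion: a bounded resolution yields `Res` data of some length `≤ n`. -/
lemma aug_to_res {𝒳 : C → Prop} (h𝒳 : IsoClosed 𝒳) :
    ∀ (n : ℕ) (M : C) (R : AugChain M), R.IsRes → (∀ j, j ≤ n → 𝒳 (R.cx.X j)) → R.BddBy n →
    ∃ m, m ≤ n ∧ Res 𝒳 m M := by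
  intro n
  induction n with
  | zero =>
    intro M R hres hterms hbdd
    haveI hepi : Epi R.π := isRes_epi_π R hres
    have hz : IsZero (R.cx.X 1) := hbdd 1 (by omega)
    have hd : R.cx.d 1 0 = 0 := hz.eq_of_src _ _
    haveI hmono : Mono R.π := by
      have h1 := hres 1
      rw [chain_exactAt_succ_iff] at h1
      have h1' : (ShortComplex.mk (R.cx.d 1 0) R.π R.w).Exact := h1
      exact (ShortComplex.exact_iff_mono _ hd).1 h1'
    haveI : IsIso R.π := isIso_of_mono_of_epi _
    exact ⟨0, le_rfl, h𝒳 (asIso R.π) (hterms 0 le_rfl)⟩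
  | succ n ih =>
    intro M R hres hterms hbdd
    haveI hepi : Epi R.π := isRes_epi_π R hres
    let π' : R.cx.X 1 ⟶ kernel R.π := kernel.lift R.π (R.cx.d 1 0) R.w
    have hπ'k : π' ≫ kernel.ι R.π = R.cx.d 1 0 := kernel.lift_ι _ _ _
    let R' : AugChain (kernel R.π) :=
      { cx := ChainComplex.truncate.obj R.cx
        π := π'
        w := by
          show R.cx.d 2 1 ≫ π' = 0
          rw [← cancel_mono (kernel.ι R.π), Category.assoc, hπ'k, R.cx.d_comp_d, zero_comp] }
    have hres' : R'.IsRes := by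
      intro j
      match j with
      | 0 =>
        rw [chain_exactAt_zero_iff]
        show Epi π'
        have h1 := hres 1
        rw [chain_exactAt_succ_iff] at h1
        have h1' : (ShortComplex.mk (R.cx.d 1 0) R.π R.w).Exact := h1
        rw [ShortComplex.exact_iff_epi_kernel_lift] at h1'
        exact h1'
      | 1 =>
        rw [chain_exactAt_succ_iff]
        show (ShortComplex.mk (R.cx.d 2 1) π' (R'.w)).Exact
        have h2 := hres 2
        rw [chain_exactAt_succ_iff] at h2
        have h2' : (ShortComplex.mk (R.cx.d 2 1) (R.cx.d 1 0) (R.cx.d_comp_d _ _ _)).Exact := h2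
        refine (ShortComplex.exact_iff_of_epi_of_isIso_of_mono
          (S₁ := ShortComplex.mk (R.cx.d 2 1) π' (R'.w))
          (S₂ := ShortComplex.mk (R.cx.d 2 1) (R.cx.d 1 0) (R.cx.d_comp_d _ _ _))
          ⟨𝟙 _, 𝟙 _, kernel.ι R.π, by simp, by simp [hπ'k]⟩).2 h2'
      | (l + 2) =>
        rw [chain_exactAt_succ_iff]
        have h3 := hres (l + 3)
        rw [chain_exactAt_succ_iff] at h3
        exact h3
    obtain ⟨m, hm, hmres⟩ := ih (kernel R.π) R' hres'
      (fun j hj => hterms (j + 1) (by omega)) (fun j hj => hbdd (j + 1) (by omega))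
    refine ⟨m + 1, by omega, ?_⟩
    refine ⟨kernel R.π, R.cx.X 0, kernel.ι R.π, R.π, kernel.condition R.π, ?_,
      hterms 0 (by omega), hmres⟩
    exact ShortComplex.ShortExact.mk'
      (ShortComplex.exact_of_f_is_kernel _ (kernelIsKernel R.π)) inferInstance inferInstance

/-! ### The main construction -/

lemma key {𝒲 𝒳 : C → Prop} (h𝒲 : IsoClosed 𝒲) (hext : ClosedUnderExt 𝒳)
    (hcogen : IsCogenFor 𝒲 𝒳) :
    ∀ (m : ℕ) (M : C), Res 𝒳 m M →
    ∃ (K X₀ : C) (i : K ⟶ X₀) (p : X₀ ⟶ M) (hw : i ≫ p = 0),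
      (ShortComplex.mk i p hw).ShortExact ∧ 𝒳 X₀ ∧
      (IsZero K ∨ ∃ m', m' < m ∧ Res 𝒲 m' K) := by
  intro m
  induction m with
  | zero =>
    intro M hM
    refine ⟨0, M, 0, 𝟙 M, zero_comp, ?_, hM, Or.inl (isZero_zero C)⟩
    refine ShortComplex.ShortExact.mk' ?_ ⟨fun u v _ => (isZero_zero C).eq_of_tgt u v⟩
      inferInstance
    exact (ShortComplex.exact_iff_mono _ rfl).2 (show Mono (𝟙 M) by infer_instance)
  | succ m ih =>
    intro M hM
    obtain ⟨M₁, X₀, i₀, p₀, hw₀, se₀, hX₀, hM₁⟩ := hM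
    obtain ⟨K₁, Yv, iY, ρ, hwY, seY, hYv, hK₁⟩ := ih M₁ hM₁
    obtain ⟨W, Y'', α, β, hαβ, hW, hY'', seW⟩ := hcogen.2 Yv hYv
    haveI : Mono α := seW.mono_f
    haveI : Epi ρ := seY.epi_g
    haveI : Epi β := seW.epi_g
    haveI : Mono iY := seY.mono_f
    haveI : Mono i₀ := se₀.mono_f
    haveI : Epi p₀ := se₀.epi_g
    -- first pushout : U := pushout α ρ
    have SES1 := shortExact_pushout_inr α ρ β hαβ seW.gIsCokernel
    have SES2 := shortExact_pushout_ker α ρ iY hwY seY.fIsKernel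
    haveI : Mono (pushout.inr α ρ) := SES1.mono_f
    -- the W-resolution of U
    have hUres : ∃ m'', m'' < m + 1 ∧ Res 𝒲 m'' (pushout α ρ) := by
      rcases hK₁ with hz | ⟨m', hm', hres⟩
      · have hf0 : iY ≫ α = 0 := by rw [hz.eq_of_src iY 0, zero_comp]
        haveI hmono : Mono (pushout.inl α ρ) := by
          have he := SES2.exact
          exact (ShortComplex.exact_iff_mono _ hf0).1 he
        haveI : Epi (pushout.inl α ρ) := SES2.epi_g
        haveI : IsIso (pushout.inl α ρ) := isIso_of_mono_of_epi _
        exact ⟨0, Nat.succ_pos m, h𝒲 (asIso (pushout.inl α ρ)) hW⟩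
      · exact ⟨m' + 1, by omega,
          ⟨K₁, W, iY ≫ α, pushout.inl α ρ, ker_inl_zero α ρ iY hwY, SES2, hW, hres⟩⟩
    -- second pushout : V := pushout i₀ (pushout.inr α ρ)
    have SES4 := shortExact_pushout_inr i₀ (pushout.inr α ρ) p₀ hw₀ se₀.gIsCokernel
    haveI : Epi (pushout.desc β 0 (show α ≫ β = ρ ≫ 0 by rw [hαβ, comp_zero])) := SES1.epi_g
    have SES3 := shortExact_pushout_inl i₀ (pushout.inr α ρ)
      (pushout.desc β 0 (show α ≫ β = ρ ≫ 0 by rw [hαβ, comp_zero]))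
      (pushout.inr_desc _ _ _) SES1.gIsCokernel
    refine ⟨pushout α ρ, pushout i₀ (pushout.inr α ρ), pushout.inr i₀ (pushout.inr α ρ),
      pushout.desc p₀ 0 (by rw [hw₀, comp_zero]), pushout.inr_desc _ _ _, SES4, ?_,
      Or.inr hUres⟩
    -- the middle term is in 𝒳 since it is an extension of Y'' by X₀
    exact hext _ SES3 hX₀ hY''

end Stmt4Aux

/-- Lemma 3.5(a), after Auslander–Buchweitz. Let `𝒳` be closed under
extensions and `𝒲` a cogenerator for `𝒳`. If `M` admits a bounded `𝒳`-resolution of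
length `n`, then: (i) `M` admits a bounded strict `𝒲𝒳`-resolution of length at most
`n`; (ii) `M` admits a `𝒲𝒳`-approximation `0 → K → X₀ → M → 0` with `X₀ ∈ 𝒳` and
`K` of finite `𝒲`-projective dimension; (iii) `M` admits a `𝒲𝒳`-hull
`0 → M → K' → X' → 0` with `X' ∈ 𝒳` and `K'` of finite `𝒲`-projective dimension. -/
theorem stmt4 {C : Type u} [Category.{v} C] [Abelian C]
    (𝒲 𝒳 : C → Prop) (h𝒲 : IsoClosed 𝒲) (h𝒳 : IsoClosed 𝒳)
    (hext : ClosedUnderExt 𝒳) (hcogen : IsCogenFor 𝒲 𝒳)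
    {M : C} (n : ℕ) (hM : HasBddResBy 𝒳 M n) :
    (∃ m, m ≤ n ∧ ∃ R : AugChain M, R.IsStrictResBy 𝒲 𝒳 m) ∧
    (∃ (K X₀ : C) (i : K ⟶ X₀) (p : X₀ ⟶ M) (hw : i ≫ p = 0),
      (ShortComplex.mk i p hw).ShortExact ∧ 𝒳 X₀ ∧ HasBddRes 𝒲 K) ∧
    (∃ (K' X' : C) (i : M ⟶ K') (p : K' ⟶ X') (hw : i ≫ p = 0),
      (ShortComplex.mk i p hw).ShortExact ∧ 𝒳 X' ∧ HasBddRes 𝒲 K') := by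
  obtain ⟨R, hres, hterms, hbdd⟩ := hM
  obtain ⟨m, hmn, hRes⟩ := Stmt4Aux.aug_to_res h𝒳 n M R hres hterms hbdd
  obtain ⟨U, V, iU, pV, hwUV, seUV, hV, hU⟩ := Stmt4Aux.key h𝒲 hext hcogen m M hRes
  obtain ⟨W₀, Z₀, a₀, b₀, w₀, hW₀, hZ₀, se₀⟩ := hcogen.2 V hV
  have hUresAny : ∃ mU, Stmt4Aux.Res 𝒲 mU U := by
    rcases hU with hz | ⟨m', _, h⟩
    · exact ⟨1, Stmt4Aux.zero_res hz hW₀⟩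
    · exact ⟨m', h⟩
  haveI : Mono iU := seUV.mono_f
  haveI : Epi pV := seUV.epi_g
  refine ⟨?_, ?_, ?_⟩
  · -- (i) bounded strict 𝒲𝒳-resolution
    rcases hU with hz | ⟨m', hm', hres'⟩
    · -- here `pV : V ⟶ M` is an isomorphism and `M ∈ 𝒳`
      have hf0 : iU = 0 := hz.eq_of_src _ _
      haveI : Mono pV := (ShortComplex.exact_iff_mono _ hf0).1 seUV.exact
      haveI : IsIso pV := isIso_of_mono_of_epi _
      have hM𝒳 : 𝒳 M := h𝒳 (asIso pV) hV
      refine ⟨0, Nat.zero_le n, Stmt4Aux.trivialAug M, Stmt4Aux.trivialAug_isRes M,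
        Stmt4Aux.trivialAug_bdd M, hM𝒳, ?_⟩
      intro j h1 h2
      omega
    · obtain ⟨R_U, hRU1, hRU2, hRU3⟩ := Stmt4Aux.res_to_aug m' U hres'
      refine ⟨m' + 1, by omega, Stmt4Aux.prepend R_U iU pV hwUV,
        Stmt4Aux.prepend_isRes R_U hRU1 seUV, ?_, hV, ?_⟩
      · intro j hj
        match j, hj with
        | (j' + 1), _ => exact hRU3 j' (by omega)
      · intro j h1 h2
        match j, h1 with
        | (j' + 1), _ => exact hRU2 j' (by omega)
  · -- (ii) 𝒲𝒳-approximation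
    refine ⟨U, V, iU, pV, hwUV, seUV, hV, ?_⟩
    obtain ⟨mU, hresU⟩ := hUresAny
    exact ⟨mU, Stmt4Aux.res_hasBddResBy mU U hresU⟩
  · -- (iii) 𝒲𝒳-hull via the pushout of `pV` along `a₀ : V ⟶ W₀`
    haveI : Mono a₀ := se₀.mono_f
    haveI : Epi b₀ := se₀.epi_g
    have SESA := Stmt4Aux.shortExact_pushout_inr a₀ pV b₀ w₀ se₀.gIsCokernel
    have SESB := Stmt4Aux.shortExact_pushout_ker a₀ pV iU hwUV seUV.fIsKernel
    refine ⟨pushout a₀ pV, Z₀, pushout.inr a₀ pV,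
      pushout.desc b₀ 0 (by rw [w₀, comp_zero]), pushout.inr_desc _ _ _, SESA, hZ₀, ?_⟩
    obtain ⟨mU, hresU⟩ := hUresAny
    have : Stmt4Aux.Res 𝒲 (mU + 1) (pushout a₀ pV) :=
      ⟨U, W₀, iU ≫ a₀, pushout.inl a₀ pV, Stmt4Aux.ker_inl_zero a₀ pV iU hwUV,
        SESB, hW₀, hresU⟩
    exact ⟨mU + 1, Stmt4Aux.res_hasBddResBy _ _ this⟩
end

section
/- Let A be an abelian category and X a class of objects of A closed under direct summands. Let n ≥ 0 and let X → M be a proper X-resolution of an object M such that for every object N of A the (n+1)-st cohomology of the complex Hom_A(X, N) vanishes (i.e., H₋₍ₙ₊₁₎(Hom_A(X, N)) = 0 for all N). Then the n-th syzygy of the resolution lies in X — that is, Ker(∂^X_{n−1}) ∈ X, where Ker(∂^X_{−1}) is interpreted as M — and consequently M admits a bounded X-resolution of length at most n. -/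
/-! Common definitions: relative homological algebra in an abelian category,
following Sather-Wagstaff–Sharif–White, "Gorenstein cohomology in abelian categories". -/

open CategoryTheory CategoryTheory.Limits Opposite

universe w v u

section Work
variable {C : Type u} [Category.{v} C] [Abelian C]

lemma hom_surj {M : C} (R : AugChain M) (n : ℕ) (N : C)
    (hvan : IsZero (((homToCplx (ComplexShape.down ℕ) N).obj (op R.cx)).homology (n + 1)))
    (f : R.cx.X (n + 1) ⟶ N) (hf : R.cx.d (n + 2) (n + 1) ≫ f = 0) :
    ∃ g : R.cx.X n ⟶ N, R.cx.d (n + 1) n ≫ g = f := by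
  set T := (homToCplx (ComplexShape.down ℕ) N).obj (op R.cx) with hT
  have hex : T.ExactAt (n + 1) := (T.exactAt_iff_isZero_homology (n + 1)).2 hvan
  have hrel1 : (ComplexShape.down ℕ).symm.Rel n (n + 1) := rfl
  have hrel2 : (ComplexShape.down ℕ).symm.Rel (n + 1) (n + 2) := rfl
  rw [T.exactAt_iff' n (n + 1) (n + 2)
    ((ComplexShape.down ℕ).symm.prev_eq' hrel1)
    ((ComplexShape.down ℕ).symm.next_eq' hrel2)] at hex
  rw [ShortComplex.ab_exact_iff] at hex
  have hf' : ((T.sc' n (n+1) (n+2)).g : T.X (n+1) → T.X (n+2)) f = 0 := by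
    dsimp [hT, homToCplx, HomologicalComplex.sc']
    exact hf
  obtain ⟨g, hg⟩ := hex f hf'
  refine ⟨g, ?_⟩
  exact hg



variable {C : Type u} [Category.{v} C] [Abelian C]

lemma epi_toCycles_of_exactAt (A : ChainComplex C ℕ) (j : ℕ) (hA : A.ExactAt j) :
    Epi (A.toCycles (j + 1) j) := by
  rw [HomologicalComplex.exactAt_iff] at hA
  have h : Epi ((A.sc j).toCycles) := hA.epi_toCycles
  have hp : (ComplexShape.down ℕ).prev j = j + 1 := (ComplexShape.down ℕ).prev_eq' rfl
  have e : A.toCycles (j + 1) j =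
      (A.XIsoOfEq hp).inv ≫
        (show A.X ((ComplexShape.down ℕ).prev j) ⟶ A.cycles j from (A.sc j).toCycles) := by
    apply (cancel_mono (A.iCycles j)).1
    rw [HomologicalComplex.toCycles_i, Category.assoc]
    erw [(A.sc j).toCycles_i]
    show A.d (j + 1) j = (A.XIsoOfEq hp).inv ≫ A.d ((ComplexShape.down ℕ).prev j) j
    rw [HomologicalComplex.XIsoOfEq_inv_comp_d]
  rw [e]
  exact @epi_comp _ _ _ _ _ _ inferInstance _ h

lemma part1 (𝒳 : C → Prop)
    (hsummand : ∀ (X A : C), 𝒳 X → (∃ (i : A ⟶ X) (r : X ⟶ A), i ≫ r = 𝟙 A) → 𝒳 A)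
    {M : C} (R : AugChain M) (hRres : R.IsRes) (hmem : ∀ j, 𝒳 (R.cx.X j)) (n : ℕ)
    (hvan : IsZero (((homToCplx (ComplexShape.down ℕ)
      (R.aug.cycles (n + 1))).obj (op R.cx)).homology (n + 1))) :
    𝒳 (R.aug.cycles n) := by
  set A := R.aug with hA
  have hzero : A.iCycles (n + 1) ≫ A.toCycles (n + 1) n = 0 := by
    apply (cancel_mono (A.iCycles n)).1
    simp
  set S : ShortComplex C := ShortComplex.mk _ _ hzero with hS
  have hnext : (ComplexShape.down ℕ).next (n + 1) = n := ChainComplex.next_nat_succ n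
  have hSexact : S.Exact := by
    apply ShortComplex.exact_of_f_is_kernel
    refine KernelFork.IsLimit.ofι _ _
      (fun {T} t ht => A.liftCycles t n hnext ?_) (fun {T} t ht => ?_) ?_
    · have h2 : (t ≫ A.toCycles (n + 1) n) ≫ A.iCycles n = 0 := by
        rw [ht, zero_comp]
      rwa [Category.assoc, HomologicalComplex.toCycles_i] at h2
    · exact HomologicalComplex.liftCycles_i _ _ _ _ _
    · intro T t ht m hm
      apply (cancel_mono (A.iCycles (n + 1))).1
      simpa using hm
  have hepig : Epi S.g := epi_toCycles_of_exactAt A n (hRres n)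
  have hp : Epi (A.toCycles (n + 2) (n + 1)) :=
    epi_toCycles_of_exactAt A (n + 1) (hRres (n + 1))
  have hcocycle : R.cx.d (n + 2) (n + 1) ≫
      (show R.cx.X (n + 1) ⟶ A.cycles (n + 1) from A.toCycles (n + 2) (n + 1)) = 0 := by
    show A.d (n + 3) (n + 2) ≫ A.toCycles (n + 2) (n + 1) = 0
    apply (cancel_mono (A.iCycles (n + 1))).1
    simp
  obtain ⟨q, hq⟩ := hom_surj R n (A.cycles (n + 1)) hvan
    (show R.cx.X (n + 1) ⟶ A.cycles (n + 1) from A.toCycles (n + 2) (n + 1)) hcocycle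
  have hretr : A.iCycles (n + 1) ≫ q = 𝟙 _ := by
    apply (cancel_epi (A.toCycles (n + 2) (n + 1))).1
    erw [← Category.assoc, HomologicalComplex.toCycles_i, Category.comp_id]
    exact hq
  have spl := ShortComplex.Splitting.ofExactOfRetraction S hSexact q hretr hepig
  exact hsummand (R.cx.X n) (A.cycles n) (hmem n) ⟨spl.s, S.g, spl.s_g⟩

namespace TruncWork
open ZeroObject

variable {C : Type u} [Category.{v} C] [Abelian C] {M : C} (R : AugChain M) (n : ℕ)

/-- terms of the truncated resolution -/
noncomputable def tX (j : ℕ) : C :=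
  if j < n then R.cx.X j else if j = n then R.aug.cycles n else 0

noncomputable def tXIsoA (j : ℕ) (h : j < n) : tX R n j ≅ R.cx.X j :=
  eqToIso (by simp [tX, h])

noncomputable def tXIsoK : tX R n n ≅ R.aug.cycles n :=
  eqToIso (by simp [tX])

lemma tX_isZero (j : ℕ) (h : n < j) : IsZero (tX R n j) := by
  simp only [tX, if_neg (by omega : ¬ j < n), if_neg (by omega : ¬ j = n)]
  exact isZero_zero C

lemma tX_eq_cycles (j : ℕ) (h : j = n) : tX R n j = R.aug.cycles j := by
  subst h; simp [tX]

/-- differentials of the truncated resolution -/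
noncomputable def td (j : ℕ) : tX R n (j + 1) ⟶ tX R n j :=
  if h : j + 1 < n then
    (tXIsoA R n (j + 1) h).hom ≫ R.cx.d (j + 1) j ≫ (tXIsoA R n j (by omega)).inv
  else if h' : j + 1 = n then
    eqToHom (tX_eq_cycles R n (j + 1) h') ≫ R.aug.iCycles (j + 1) ≫
      (tXIsoA R n j (by omega)).inv
  else 0

lemma td_comp (j : ℕ) : td R n (j + 1) ≫ td R n j = 0 := by
  by_cases h1 : j + 2 < n
  · rw [td, dif_pos h1, td, dif_pos (by omega : j + 1 < n)]
    simp [tXIsoA]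
  · by_cases h2 : j + 2 = n
    · rw [td, dif_neg (by omega), dif_pos h2, td, dif_pos (by omega : j + 1 < n)]
      have h0 : R.aug.iCycles (j + 2) ≫ R.cx.d (j + 1) j = 0 :=
        R.aug.iCycles_d (j + 2) (j + 1)
      simp [tXIsoA, reassoc_of% h0, h0]
      erw [Category.assoc, eqToHom_trans_assoc, Category.id_comp]
      exact ((Category.assoc _ _ _).symm.trans ((reassoc_of% h0) _)).trans zero_comp
    · rw [td, dif_neg (by omega), dif_neg h2, zero_comp]

noncomputable def tCx : ChainComplex C ℕ :=
  ChainComplex.of (tX R n) (td R n) (td_comp R n)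

noncomputable def tπ : (tCx R n).X 0 ⟶ M :=
  if h : 0 < n then (tXIsoA R n 0 h).hom ≫ R.π
  else eqToHom (tX_eq_cycles R n 0 (by omega)) ≫ R.aug.iCycles 0

lemma tw : (tCx R n).d 1 0 ≫ tπ R n = 0 := by
  rw [show (tCx R n).d 1 0 = td R n 0 from ChainComplex.of_d (tX R n) (td R n) 0]
  by_cases h1 : (1 : ℕ) < n
  · rw [td, dif_pos h1, tπ, dif_pos (by omega)]
    have h0 : R.cx.d 1 0 ≫ R.π = 0 := R.w
    simp [tXIsoA, reassoc_of% h0, h0]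
    erw [Category.assoc, Category.assoc, eqToHom_trans_assoc, Category.id_comp, h0, comp_zero]
  · by_cases h2 : (1 : ℕ) = n
    · rw [td, dif_neg (by omega), dif_pos h2, tπ, dif_pos (by omega)]
      have h0 : R.aug.iCycles 1 ≫ R.π = 0 := R.aug.iCycles_d 1 0
      simp [tXIsoA, reassoc_of% h0, h0]
      erw [Category.assoc, Category.assoc, eqToHom_trans_assoc, Category.id_comp, h0, comp_zero]
    · rw [td, dif_neg (by omega), dif_neg (by omega)]
      exact zero_comp

/-- the truncated resolution -/
noncomputable def tR : AugChain M := ⟨tCx R n, tπ R n, tw R n⟩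

end TruncWork

namespace TruncWork

variable {C : Type u} [Category.{v} C] [Abelian C] {M : C} (R : AugChain M) (n : ℕ)

lemma tR_aug_d (i j : ℕ) : (tR R n).aug.d (i + 1) (j + 1) = (tCx R n).d i j :=
  ChainComplex.augment_d_succ_succ _ _ _ i j

lemma tCx_d (i : ℕ) : (tCx R n).d (i + 1) i = td R n i := ChainComplex.of_d (tX R n) (td R n) i

lemma tR_aug_d_one_zero : (tR R n).aug.d 1 0 = tπ R n := rfl

lemma tAug_X_eq (j : ℕ) (h : j ≤ n) : R.aug.X j = (tR R n).aug.X j := by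
  cases j with
  | zero => rfl
  | succ i =>
      show R.cx.X i = tX R n i
      rw [tX, if_pos (by omega)]

lemma tAug_comm (k : ℕ) (h : k + 1 ≤ n) :
    eqToHom (tAug_X_eq R n (k + 1) h) ≫ (tR R n).aug.d (k + 1) k
      = R.aug.d (k + 1) k ≫ eqToHom (tAug_X_eq R n k (by omega)) := by
  cases k with
  | zero =>
      rw [tR_aug_d_one_zero, tπ, dif_pos (by omega : 0 < n)]
      have : R.aug.d 1 0 = R.π := rfl
      rw [this]
      simp [tXIsoA]
      erw [eqToHom_trans_assoc]
      exact (Category.id_comp _).trans (Category.comp_id _).symm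
  | succ i =>
      rw [tR_aug_d, tCx_d, td, dif_pos (by omega : i + 1 < n)]
      have : R.aug.d (i + 1 + 1) (i + 1) = R.cx.d (i + 1) i := rfl
      rw [this]
      simp [tXIsoA]
      erw [eqToHom_trans_assoc]
      exact Category.id_comp _

lemma tX_top_eq (m : ℕ) (h : n = m + 1) :
    R.aug.cycles (m + 1) = (tR R n).aug.X (m + 2) := by
  subst h
  exact (tX_eq_cycles R (m + 1) (m + 1) rfl).symm

lemma tAug_comm_top (m : ℕ) (h : n = m + 1) :
    eqToHom (tX_top_eq R n m h) ≫ (tR R n).aug.d (m + 2) (m + 1)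
      = R.aug.iCycles (m + 1) ≫ eqToHom (tAug_X_eq R n (m + 1) (by omega)) := by
  rw [tR_aug_d, tCx_d, td, dif_neg (by omega : ¬ m + 1 < n), dif_pos (by omega : m + 1 = n)]
  subst h
  simp [tXIsoA]
  erw [eqToHom_trans_assoc]
  exact Category.id_comp _

lemma td_zero (j : ℕ) (h : n ≤ j) : td R n j = 0 := by
  rw [td, dif_neg (by omega), dif_neg (by omega)]

end TruncWork

namespace TruncWork

variable {C : Type u} [Category.{v} C] [Abelian C] {M : C} (R : AugChain M) (n : ℕ)

lemma hprev (j : ℕ) : (ComplexShape.down ℕ).prev j = j + 1 :=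
  (ComplexShape.down ℕ).prev_eq' rfl

lemma tR_isRes (hRres : R.IsRes) : (tR R n).IsRes := by
  intro j
  rcases lt_trichotomy j n with hj | rfl | hj
  · -- j < n : compare with R.aug
    cases j with
    | zero =>
        rw [(tR R n).aug.exactAt_iff' 1 0 0 (hprev 0) ChainComplex.next_nat_zero]
        have hA := hRres 0
        rw [R.aug.exactAt_iff' 1 0 0 (hprev 0) ChainComplex.next_nat_zero] at hA
        have h1 : (tR R n).aug.d 0 0 = 0 :=
          (tR R n).aug.shape 0 0 (by simp [ComplexShape.down])
        have h2 : R.aug.d 0 0 = 0 := R.aug.shape 0 0 (by simp [ComplexShape.down])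
        have e : R.aug.sc' 1 0 0 ≅ (tR R n).aug.sc' 1 0 0 :=
          ShortComplex.isoMk (eqToIso (tAug_X_eq R n 1 (by omega)))
            (eqToIso (tAug_X_eq R n 0 (by omega))) (eqToIso (tAug_X_eq R n 0 (by omega)))
            (by exact tAug_comm R n 0 (by omega)) (by simp [h1, h2]; erw [comp_zero, zero_comp])
        exact ShortComplex.exact_of_iso e hA
    | succ i =>
        rw [(tR R n).aug.exactAt_iff' (i + 2) (i + 1) i (hprev _)
          (ChainComplex.next_nat_succ _)]
        have hA := hRres (i + 1)
        rw [R.aug.exactAt_iff' (i + 2) (i + 1) i (hprev _)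
          (ChainComplex.next_nat_succ _)] at hA
        have e : R.aug.sc' (i + 2) (i + 1) i ≅ (tR R n).aug.sc' (i + 2) (i + 1) i :=
          ShortComplex.isoMk (eqToIso (tAug_X_eq R n (i + 2) (by omega)))
            (eqToIso (tAug_X_eq R n (i + 1) (by omega)))
            (eqToIso (tAug_X_eq R n i (by omega)))
            (by exact tAug_comm R n (i + 1) (by omega))
            (by exact tAug_comm R n i (by omega))
        exact ShortComplex.exact_of_iso e hA
  · -- j = n
    cases j with
    | zero =>
        rw [(tR R 0).aug.exactAt_iff' 1 0 0 (hprev 0) ChainComplex.next_nat_zero]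
        rw [ShortComplex.exact_iff_epi _
          ((tR R 0).aug.shape 0 0 (by simp [ComplexShape.down]))]
        show Epi ((tR R 0).aug.d 1 0)
        rw [tR_aug_d_one_zero, tπ, dif_neg (by omega)]
        have : IsIso (R.aug.iCycles 0) :=
          R.aug.isIso_iCycles 0 0 ChainComplex.next_nat_zero
            (R.aug.shape 0 0 (by simp [ComplexShape.down]))
        exact @epi_comp _ _ _ _ _ _ (@IsIso.epi_of_iso _ _ _ _ _ (eqToIso (tX_eq_cycles R 0 0 (by omega))).isIso_hom) _ (@IsIso.epi_of_iso _ _ _ _ _ this)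
    | succ m =>
        rw [(tR R (m + 1)).aug.exactAt_iff' (m + 2) (m + 1) m (hprev _)
          (ChainComplex.next_nat_succ _)]
        have hS₀ : (ShortComplex.mk (R.aug.iCycles (m + 1)) (R.aug.d (m + 1) m)
            (R.aug.iCycles_d _ _)).Exact :=
          ShortComplex.exact_of_f_is_kernel _
            (R.aug.cyclesIsKernel (m + 1) m (ChainComplex.next_nat_succ m))
        have e : ShortComplex.mk (R.aug.iCycles (m + 1)) (R.aug.d (m + 1) m)
            (R.aug.iCycles_d _ _) ≅ (tR R (m + 1)).aug.sc' (m + 2) (m + 1) m :=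
          ShortComplex.isoMk (eqToIso (tX_top_eq R (m + 1) m rfl))
            (eqToIso (tAug_X_eq R (m + 1) (m + 1) (by omega)))
            (eqToIso (tAug_X_eq R (m + 1) m (by omega)))
            (by exact tAug_comm_top R (m + 1) m rfl)
            (by exact tAug_comm R (m + 1) m (by omega))
        exact ShortComplex.exact_of_iso e hS₀
  · -- j > n
    rcases Nat.exists_eq_add_of_lt hj with ⟨k, rfl⟩
    cases k with
    | zero =>
        rw [(tR R n).aug.exactAt_iff' (n + 2) (n + 1) n (hprev _)
          (ChainComplex.next_nat_succ _)]
        have hf : (tR R n).aug.d (n + 2) (n + 1) = 0 := by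
          rw [tR_aug_d, tCx_d, td_zero R n n le_rfl]; rfl
        rw [ShortComplex.exact_iff_mono _ hf]
        show Mono ((tR R n).aug.d (n + 1) n)
        cases n with
        | zero =>
            rw [tR_aug_d_one_zero, tπ, dif_neg (by omega)]
            exact @mono_comp _ _ _ _ _ _ (@IsIso.mono_of_iso _ _ _ _ _ (eqToIso (tX_eq_cycles R 0 0 (by omega))).isIso_hom) _ (HomologicalComplex.instMonoICycles _ _)
        | succ m =>
            have h2 : (tR R (m + 1)).aug.d (m + 2) (m + 1)
                = eqToHom (tX_top_eq R (m + 1) m rfl).symm ≫ R.aug.iCycles (m + 1)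
                  ≫ eqToHom (tAug_X_eq R (m + 1) (m + 1) (by omega)) := by
              rw [← tAug_comm_top R (m + 1) m rfl, ← Category.assoc, eqToHom_trans,
                eqToHom_refl, Category.id_comp]
            rw [h2]
            exact mono_comp _ _
    | succ k =>
        rw [HomologicalComplex.exactAt_iff]
        apply ShortComplex.exact_of_isZero_X₂
        show IsZero ((tR R n).aug.X (n + (k + 1) + 1))
        have hz : IsZero (tX R n (n + (k + 1))) := tX_isZero R n _ (by omega)
        exact hz.of_iso (eqToIso rfl)

end TruncWork

/-- Proposition 4.5(a). Let `𝒳` be closed under direct summands,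
`n ≥ 0`, and let `X → M` be a proper `𝒳`-resolution such that the relative cohomology
`Ext^{n+1}_{𝒳A}(M, N) = H₋₍ₙ₊₁₎(Hom_A(X, N))` vanishes for every object `N`. Then the
`n`-th syzygy `Ker(∂^X_{n-1})` lies in `𝒳` (where `Ker(∂^X_{-1}) = M`), and `M` admits
a bounded `𝒳`-resolution of length at most `n`. Here the `n`-th syzygy is the cycle
object of the augmented complex in degree `n`. -/
theorem stmt6 {C : Type u} [Category.{v} C] [Abelian C]
    (𝒳 : C → Prop) (h𝒳 : IsoClosed 𝒳)
    (hsummand : ∀ (X A : C), 𝒳 X → (∃ (i : A ⟶ X) (r : X ⟶ A), i ≫ r = 𝟙 A) → 𝒳 A)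
    {M : C} (R : AugChain M) (hR : R.IsProperRes 𝒳) (n : ℕ)
    (hvan : ∀ N : C,
      IsZero (((homToCplx (ComplexShape.down ℕ) N).obj (op R.cx)).homology (n + 1))) :
    𝒳 (R.aug.cycles n) ∧ HasBddResBy 𝒳 M n := by
  obtain ⟨hres, hmem, -⟩ := hR
  have hK : 𝒳 (R.aug.cycles n) := part1 𝒳 hsummand R hres hmem n (hvan _)
  refine ⟨hK, TruncWork.tR R n, TruncWork.tR_isRes R n hres, ?_, ?_⟩
  · intro j hj
    show 𝒳 (TruncWork.tX R n j)
    by_cases h : j < n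
    · exact h𝒳 (TruncWork.tXIsoA R n j h).symm (hmem j)
    · obtain rfl : j = n := by omega
      exact h𝒳 (TruncWork.tXIsoK R j).symm hK
  · intro j hj
    show IsZero (TruncWork.tX R n j)
    exact TruncWork.tX_isZero R n j hj
end Work
end
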